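/- Let $P \subset \mathbb{R}^d$ be a compact convex polytope with vertices $a_1,\dots,a_n$ ($n\ge 2$) and nonempty interior $P^o$. For $x \in P^o$ define $U(x) = \max\{\sum_{i=1}^n \ln p_i : p_i > 0, \sum_i p_i = 1, \sum_i p_i a_i = x\}$. Then $U$ is strictly concave on $P^o$. -/

import Mathlib

open Finset

/-- The entropy function of a polytope with vertices `a 1, …, a n`:
`U(x) = sup { ∑ᵢ ln pᵢ : pᵢ > 0, ∑ pᵢ = 1, ∑ pᵢ aᵢ = x }`. -/
noncomputable def entropyU {d n : ℕ} (a : Fin n → EuclideanSpace ℝ (Fin d))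
    (x : EuclideanSpace ℝ (Fin d)) : ℝ :=
  sSup {s | ∃ p : Fin n → ℝ, (∀ i, 0 < p i) ∧ ∑ i, p i = 1 ∧
    ∑ i, p i • a i = x ∧ s = ∑ i, Real.log (p i)}

/-- Coordinates of a convex combination are at most 1. -/
lemma aux_le_one {n : ℕ} (p : Fin n → ℝ) (hp : ∀ i, 0 < p i) (hsum : ∑ i, p i = 1)
    (i : Fin n) : p i ≤ 1 := by
  rw [← hsum]
  exact Finset.single_le_sum (fun j _ => (hp j).le) (mem_univ i)

/-- The set of achievable values is bounded above by 0. -/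
lemma aux_bdd {d n : ℕ} (a : Fin n → EuclideanSpace ℝ (Fin d))
    (x : EuclideanSpace ℝ (Fin d)) :
    BddAbove {s | ∃ p : Fin n → ℝ, (∀ i, 0 < p i) ∧ ∑ i, p i = 1 ∧
      ∑ i, p i • a i = x ∧ s = ∑ i, Real.log (p i)} := by
  refine ⟨0, ?_⟩
  rintro v ⟨q, hq0, hq1, -, rfl⟩
  exact Finset.sum_nonpos fun i _ => Real.log_nonpos (hq0 i).le (aux_le_one q hq0 hq1 i)

/-- Nonnegative representation of a point of the convex hull. -/
lemma aux_rep {d n : ℕ} (a : Fin n → EuclideanSpace ℝ (Fin d))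
    {y : EuclideanSpace ℝ (Fin d)} (hy : y ∈ convexHull ℝ (Set.range a)) :
    ∃ q : Fin n → ℝ, (∀ i, 0 ≤ q i) ∧ ∑ i, q i = 1 ∧ ∑ i, q i • a i = y := by
  rw [convexHull_range_eq_exists_affineCombination] at hy
  obtain ⟨s, w, hw0, hw1, hwy⟩ := hy
  refine ⟨fun i => if i ∈ s then w i else 0, fun i => ?_, ?_, ?_⟩
  · dsimp only; split
    · exact hw0 i ‹_›
    · exact le_refl 0
  · simp only
    rw [Finset.sum_ite_mem, Finset.univ_inter, hw1]
  · have h : ∀ i, (if i ∈ s then w i else 0) • a i = if i ∈ s then w i • a i else 0 := by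
      intro i; split <;> simp
    simp only [h]
    rw [Finset.sum_ite_mem, Finset.univ_inter,
      ← affineCombination_eq_linear_combination s a w hw1, hwy]

/-- Strictly positive representation of an interior point of the convex hull. -/
lemma aux_pos_rep {d n : ℕ} (hn : 2 ≤ n) (a : Fin n → EuclideanSpace ℝ (Fin d))
    {x : EuclideanSpace ℝ (Fin d)} (hx : x ∈ interior (convexHull ℝ (Set.range a))) :
    ∃ p : Fin n → ℝ, (∀ i, 0 < p i) ∧ ∑ i, p i = 1 ∧ ∑ i, p i • a i = x := by
  have hn0 : (0:ℝ) < n := by positivity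
  have hnne : (n:ℝ) ≠ 0 := ne_of_gt hn0
  set c : EuclideanSpace ℝ (Fin d) := ∑ i, ((n:ℝ)⁻¹) • a i with hc
  obtain ⟨δ, hδ, hball⟩ := Metric.mem_nhds_iff.mp (mem_interior_iff_mem_nhds.mp hx)
  set θ : ℝ := δ / (2 * (‖x - c‖ + 1)) with hθdef
  have hnc : (0:ℝ) < ‖x - c‖ + 1 := by positivity
  have hθ : 0 < θ := by positivity
  have h1θ : (0:ℝ) < 1 + θ := by positivity
  set y : EuclideanSpace ℝ (Fin d) := x + θ • (x - c) with hydef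
  have hymem : y ∈ convexHull ℝ (Set.range a) := by
    refine hball ?_
    rw [Metric.mem_ball, dist_eq_norm]
    have h2 : y - x = θ • (x - c) := by rw [hydef]; abel
    rw [h2, norm_smul, Real.norm_eq_abs, abs_of_pos hθ]
    have h3 : ‖x - c‖ / (2 * (‖x - c‖ + 1)) < 1 := by
      rw [div_lt_one (by positivity)]
      nlinarith [norm_nonneg (x - c)]
    calc θ * ‖x - c‖ = δ * (‖x - c‖ / (2 * (‖x - c‖ + 1))) := by rw [hθdef]; ring
    _ < δ * 1 := by exact (mul_lt_mul_iff_right₀ hδ).mpr h3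
    _ = δ := mul_one δ
  obtain ⟨q, hq0, hq1, hqy⟩ := aux_rep a hymem
  refine ⟨fun i => (1+θ)⁻¹ * q i + (θ/(1+θ)) * (n:ℝ)⁻¹, fun i => ?_, ?_, ?_⟩
  · have h4 : 0 < (θ/(1+θ)) * (n:ℝ)⁻¹ := by positivity
    have h5 : 0 ≤ (1+θ)⁻¹ * q i := mul_nonneg (by positivity) (hq0 i)
    linarith
  · rw [Finset.sum_add_distrib, ← Finset.mul_sum, hq1, Finset.sum_const, card_univ,
      Fintype.card_fin, nsmul_eq_mul]
    field_simp
  · have hsum : ∑ i, ((1+θ)⁻¹ * q i + (θ/(1+θ)) * (n:ℝ)⁻¹) • a i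
        = (1+θ)⁻¹ • y + (θ/(1+θ)) • c := by
      simp_rw [add_smul, Finset.sum_add_distrib, mul_smul, ← Finset.smul_sum, hqy, hc]
      rw [Finset.smul_sum]
    rw [hsum, hydef]
    match_scalars <;> field_simp <;> ring

/-- The supremum defining `entropyU` is attained. -/
lemma aux_greatest {d n : ℕ} (a : Fin n → EuclideanSpace ℝ (Fin d))
    {x : EuclideanSpace ℝ (Fin d)} (p0 : Fin n → ℝ) (h0 : ∀ i, 0 < p0 i)
    (hs0 : ∑ i, p0 i = 1) (hc0 : ∑ i, p0 i • a i = x) :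
    ∃ p : Fin n → ℝ, (∀ i, 0 < p i) ∧ ∑ i, p i = 1 ∧ ∑ i, p i • a i = x ∧
      IsGreatest {s | ∃ p : Fin n → ℝ, (∀ i, 0 < p i) ∧ ∑ i, p i = 1 ∧
        ∑ i, p i • a i = x ∧ s = ∑ i, Real.log (p i)} (∑ i, Real.log (p i)) := by
  set s0 : ℝ := ∑ i, Real.log (p0 i) with hs0def
  set ε : ℝ := Real.exp s0 with hεdef
  have hε : 0 < ε := Real.exp_pos s0
  have key : ∀ (p : Fin n → ℝ), (∀ i, 0 < p i) → ∑ i, p i = 1 →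
      s0 ≤ ∑ i, Real.log (p i) → ∀ i, ε ≤ p i := by
    intro p hp hsum hval i
    have hlog : ∑ j, Real.log (p j) ≤ Real.log (p i) := by
      rw [← Finset.add_sum_erase _ _ (mem_univ i)]
      have : ∑ j ∈ univ.erase i, Real.log (p j) ≤ 0 :=
        Finset.sum_nonpos fun j _ => Real.log_nonpos (hp j).le (aux_le_one p hp hsum j)
      linarith
    calc ε = Real.exp s0 := rfl
    _ ≤ Real.exp (Real.log (p i)) := Real.exp_le_exp.mpr (le_trans hval hlog)
    _ = p i := Real.exp_log (hp i)
  set K : Set (Fin n → ℝ) := (Set.univ.pi fun _ => Set.Icc ε 1) ∩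
    ((fun p : Fin n → ℝ => ∑ i, p i) ⁻¹' {1} ∩ (fun p : Fin n → ℝ => ∑ i, p i • a i) ⁻¹' {x})
    with hKdef
  have hcont1 : Continuous fun p : Fin n → ℝ => ∑ i, p i :=
    continuous_finset_sum _ fun i _ => continuous_apply i
  have hcont2 : Continuous fun p : Fin n → ℝ => ∑ i, p i • a i :=
    continuous_finset_sum _ fun i _ => (continuous_apply i).smul continuous_const
  have hKclosed : IsClosed K :=
    ((isClosed_set_pi fun i _ => isClosed_Icc).inter
      ((isClosed_singleton.preimage hcont1).inter
        (isClosed_singleton.preimage hcont2)))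
  have hKcompact : IsCompact K :=
    (isCompact_univ_pi fun _ => isCompact_Icc).of_isClosed_subset hKclosed
      fun p hp => hp.1
  have hp0K : p0 ∈ K :=
    ⟨fun i _ => ⟨key p0 h0 hs0 le_rfl i, aux_le_one p0 h0 hs0 i⟩, by simp [hs0], by simp [hc0]⟩
  have hcontlog : ContinuousOn (fun p : Fin n → ℝ => ∑ i, Real.log (p i)) K := by
    apply continuousOn_finset_sum
    intro i _
    exact ContinuousOn.log (continuous_apply i).continuousOn
      fun p hp => ne_of_gt (lt_of_lt_of_le hε (hp.1 i (Set.mem_univ i)).1)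
  obtain ⟨p, hpK, hpmax⟩ := hKcompact.exists_isMaxOn ⟨p0, hp0K⟩ hcontlog
  have hppos : ∀ i, 0 < p i := fun i => lt_of_lt_of_le hε (hpK.1 i (Set.mem_univ i)).1
  have hpsum : ∑ i, p i = 1 := hpK.2.1
  have hpcomb : ∑ i, p i • a i = x := hpK.2.2
  refine ⟨p, hppos, hpsum, hpcomb, ⟨⟨p, hppos, hpsum, hpcomb, rfl⟩, ?_⟩⟩
  rintro s ⟨q, hq0, hq1, hq2, rfl⟩
  by_cases hcase : s0 ≤ ∑ i, Real.log (q i)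
  · exact hpmax ⟨fun i _ => ⟨key q hq0 hq1 hcase i, aux_le_one q hq0 hq1 i⟩,
      by simp [hq1], by simp [hq2]⟩
  · have := hpmax hp0K
    push_neg at hcase
    exact le_trans hcase.le this

/-- The entropy function `U` is strictly concave on the interior of the polytope. -/
theorem stmt_5 {d n : ℕ} (hn : 2 ≤ n) (a : Fin n → EuclideanSpace ℝ (Fin d))
    (ha : Function.Injective a)
    (P : Set (EuclideanSpace ℝ (Fin d)))
    (hP : P = convexHull ℝ (Set.range a))
    (hvert : ∀ i, a i ∈ Set.extremePoints ℝ P)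
    (hint : (interior P).Nonempty) :
    StrictConcaveOn ℝ (interior P) (entropyU a) := by
  have hconv : Convex ℝ (interior P) := (hP ▸ convex_convexHull ℝ (Set.range a)).interior
  refine ⟨hconv, ?_⟩
  intro x hx y hy hxy t s ht hs hts
  rw [hP] at hx hy
  obtain ⟨px0, hpx00, hpx01, hpx02⟩ := aux_pos_rep hn a hx
  obtain ⟨px, hpxpos, hpxsum, hpxcomb, hpxgr⟩ := aux_greatest a px0 hpx00 hpx01 hpx02
  obtain ⟨py0, hpy00, hpy01, hpy02⟩ := aux_pos_rep hn a hy
  obtain ⟨py, hpypos, hpysum, hpycomb, hpygr⟩ := aux_greatest a py0 hpy00 hpy01 hpy02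
  have hEx : entropyU a x = ∑ i, Real.log (px i) := hpxgr.csSup_eq
  have hEy : entropyU a y = ∑ i, Real.log (py i) := hpygr.csSup_eq
  -- the combined weights
  set r : Fin n → ℝ := fun i => t * px i + s * py i with hrdef
  have hrpos : ∀ i, 0 < r i := fun i =>
    add_pos (mul_pos ht (hpxpos i)) (mul_pos hs (hpypos i))
  have hrsum : ∑ i, r i = 1 := by
    rw [hrdef]
    simp_rw [Finset.sum_add_distrib, ← Finset.mul_sum, hpxsum, hpysum]
    simpa using hts
  have hrcomb : ∑ i, r i • a i = t • x + s • y := by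
    rw [hrdef]
    simp_rw [add_smul, Finset.sum_add_distrib, mul_smul, ← Finset.smul_sum, hpxcomb, hpycomb]
  have hmem : (∑ i, Real.log (r i)) ∈ {v | ∃ p : Fin n → ℝ, (∀ i, 0 < p i) ∧ ∑ i, p i = 1 ∧
      ∑ i, p i • a i = t • x + s • y ∧ v = ∑ i, Real.log (p i)} :=
    ⟨r, hrpos, hrsum, hrcomb, rfl⟩
  -- px ≠ py
  have hpne : px ≠ py := by
    intro h
    apply hxy
    rw [← hpxcomb, ← hpycomb, h]
  obtain ⟨i0, hi0⟩ := Function.ne_iff.mp hpne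
  have hlog := strictConcaveOn_log_Ioi
  have hle : ∀ i ∈ univ, t * Real.log (px i) + s * Real.log (py i)
      ≤ Real.log (t * px i + s * py i) := by
    intro i _
    have := hlog.concaveOn.2 (Set.mem_Ioi.mpr (hpxpos i)) (Set.mem_Ioi.mpr (hpypos i))
      ht.le hs.le hts
    simpa [smul_eq_mul] using this
  have hstrict : t * Real.log (px i0) + s * Real.log (py i0)
      < Real.log (t * px i0 + s * py i0) := by
    have := hlog.2 (Set.mem_Ioi.mpr (hpxpos i0)) (Set.mem_Ioi.mpr (hpypos i0))
      hi0 ht hs hts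
    simpa [smul_eq_mul] using this
  calc t • entropyU a x + s • entropyU a y
      = ∑ i, (t * Real.log (px i) + s * Real.log (py i)) := by
        rw [hEx, hEy, smul_eq_mul, smul_eq_mul, Finset.mul_sum, Finset.mul_sum,
          Finset.sum_add_distrib]
    _ < ∑ i, Real.log (t * px i + s * py i) :=
        Finset.sum_lt_sum hle ⟨i0, mem_univ i0, hstrict⟩
    _ ≤ entropyU a (t • x + s • y) := le_csSup (aux_bdd a (t • x + s • y)) hmem
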